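/- Let ε ∈ (0,1), M ≥ 0, and ζ ∈ (0,1), and define κ = (M+2ε)/ε, ζ̂ = ζ/(3κ), τ = √κ/(√κ+1), and T = 4κ⁴/(1−√τ)². Then the smallest nonnegative integer J such that √T·τ^{J/2} ≤ ζ̂ satisfies J ≤ ⌈(√κ + 1/2)·ln(144(√κ+1)²κ⁶/ζ²)⌉. -/

import Mathlib

lemma aux_two_mul_le (u : ℝ) (h0 : 0 ≤ u) (h1 : u < 1) :
    2*u ≤ Real.log (1+u) - Real.log (1-u) := by
  set f : ℝ → ℝ := fun x => Real.log (1+x) - Real.log (1-x) - 2*x with hf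
  have hderiv : ∀ x ∈ Set.Ioo (-1:ℝ) 1,
      HasDerivAt f (1/(1+x) + 1/(1-x) - 2) x := by
    intro x hx
    have h1x : (0:ℝ) < 1 + x := by linarith [hx.1]
    have h2x : (0:ℝ) < 1 - x := by linarith [hx.2]
    have d1 : HasDerivAt (fun x : ℝ => Real.log (1+x)) (1/(1+x)) x := by
      have h : HasDerivAt (fun x : ℝ => 1 + x) 1 x := (hasDerivAt_id x).const_add 1
      simpa using h.log h1x.ne'
    have d2 : HasDerivAt (fun x : ℝ => Real.log (1-x)) (-(1/(1-x))) x := by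
      have h : HasDerivAt (fun x : ℝ => 1 - x) (-1) x := by
        simpa using (hasDerivAt_id x).const_sub 1
      have := h.log h2x.ne'
      convert this using 1
      field_simp
    have d3 : HasDerivAt (fun x : ℝ => 2*x) 2 x := by
      simpa using (hasDerivAt_id x).const_mul 2
    have := (d1.sub d2).sub d3
    exact this.congr_deriv (by ring)
  have hsub : Set.Icc (0:ℝ) u ⊆ Set.Ioo (-1:ℝ) 1 := fun x hx =>
    ⟨by linarith [hx.1], lt_of_le_of_lt hx.2 h1⟩
  have hmono : MonotoneOn f (Set.Icc 0 u) := by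
    apply monotoneOn_of_deriv_nonneg (convex_Icc 0 u)
    · exact fun x hx => ((hderiv x (hsub hx)).continuousAt).continuousWithinAt
    · intro x hx
      rw [interior_Icc] at hx
      exact ((hderiv x (hsub ⟨hx.1.le, hx.2.le⟩)).differentiableAt).differentiableWithinAt
    · intro x hx
      rw [interior_Icc] at hx
      have hx' := hsub ⟨hx.1.le, hx.2.le⟩
      rw [(hderiv x hx').deriv]
      have h1x : (0:ℝ) < 1 + x := by linarith [hx'.1]
      have h2x : (0:ℝ) < 1 - x := by linarith [hx'.2]
      have key : 1/(1+x) + 1/(1-x) - 2 = 2*x^2/((1+x)*(1-x)) := by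
        field_simp
        ring
      rw [key]
      positivity
  have h0mem : (0:ℝ) ∈ Set.Icc (0:ℝ) u := ⟨le_refl _, h0⟩
  have humem : u ∈ Set.Icc (0:ℝ) u := ⟨h0, le_refl _⟩
  have hle := hmono h0mem humem h0
  simp only [f] at hle
  simp at hle
  linarith

lemma aux_log_one_add_inv (t : ℝ) (ht : 0 < t) :
    1/(t + 1/2) ≤ Real.log (1 + 1/t) := by
  have h2t : (0:ℝ) < 2*t+1 := by linarith
  have hu0 : (0:ℝ) ≤ 1/(2*t+1) := by positivity
  have hu1 : 1/(2*t+1) < 1 := by rw [div_lt_one h2t]; linarith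
  have key := aux_two_mul_le (1/(2*t+1)) hu0 hu1
  have e1 : 1 + 1/(2*t+1) = (2*t+2)/(2*t+1) := by field_simp; ring
  have e2 : 1 - 1/(2*t+1) = (2*t)/(2*t+1) := by field_simp; ring
  rw [e1, e2] at key
  have e3 : Real.log ((2*t+2)/(2*t+1)) - Real.log ((2*t)/(2*t+1))
      = Real.log (1+1/t) := by
    rw [Real.log_div (by positivity) (by positivity),
        Real.log_div (by positivity) (by positivity)]
    have e4 : (1:ℝ) + 1/t = (2*t+2)/(2*t) := by
      rw [eq_div_iff (by positivity)]
      field_simp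
    rw [e4, Real.log_div (by positivity) (by positivity)]
    ring
  rw [e3] at key
  have e5 : (1:ℝ)/(t+1/2) = 2/(2*t+1) := by
    rw [div_eq_div_iff (by linarith) (by linarith)]; ring
  have e6 : (2:ℝ)/(2*t+1) = 2*(1/(2*t+1)) := by ring
  rw [e5, e6]
  exact key

set_option maxHeartbeats 1000000 in
theorem stmt11
    (ε M ζ κ ζhat τ T : ℝ)
    (hε : ε ∈ Set.Ioo (0:ℝ) 1) (hM : 0 ≤ M) (hζ : ζ ∈ Set.Ioo (0:ℝ) 1)
    (hκ : κ = (M + 2*ε)/ε)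
    (hζhat : ζhat = ζ / (3*κ))
    (hτ : τ = Real.sqrt κ / (Real.sqrt κ + 1))
    (hT : T = 4 * κ^4 / (1 - Real.sqrt τ)^2)
    (J : ℕ)
    (hJ : IsLeast {j : ℕ | Real.sqrt T * Real.sqrt τ ^ j ≤ ζhat} J) :
    (J : ℤ) ≤ ⌈(Real.sqrt κ + 1/2) *
      Real.log (144 * (Real.sqrt κ + 1)^2 * κ^6 / ζ^2)⌉ := by
  obtain ⟨hε0, hε1⟩ := hε
  obtain ⟨hζ0, hζ1⟩ := hζ
  have hκ2 : (2:ℝ) ≤ κ := by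
    rw [hκ, le_div_iff₀ hε0]; linarith
  have hκ0 : (0:ℝ) < κ := by linarith
  set s := Real.sqrt κ with hs
  have hs1 : 1 ≤ s := by
    rw [hs, show (1:ℝ) = Real.sqrt 1 by simp]
    exact Real.sqrt_le_sqrt (by linarith)
  have hs0 : (0:ℝ) < s := by linarith
  have hτ0 : 0 < τ := by rw [hτ]; positivity
  have hτ1 : τ < 1 := by rw [hτ, div_lt_one (by linarith)]; linarith
  set a := Real.sqrt τ with ha
  have ha0 : 0 < a := Real.sqrt_pos.mpr hτ0
  have ha1 : a < 1 := by
    rw [ha, show (1:ℝ) = Real.sqrt 1 by simp]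
    exact Real.sqrt_lt_sqrt hτ0.le hτ1
  have hasq : a^2 = τ := Real.sq_sqrt hτ0.le
  have h1τ : 1 - τ = 1/(s+1) := by
    rw [hτ]; field_simp; ring
  have hprod : (1-a)*(1+a) = 1/(s+1) := by
    rw [← h1τ, ← hasq]; ring
  have hagap : 1/(2*(s+1)) ≤ 1 - a := by
    have h1 : 2*(1-a) ≥ (1-a)*(1+a) := by nlinarith
    rw [hprod] at h1
    rw [show (1:ℝ)/(2*(s+1)) = (1/(s+1))/2 by rw [div_div]; ring_nf]
    linarith
  have hagap0 : 0 < 1 - a := lt_of_lt_of_le (by positivity) hagap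
  have hT0 : 0 < T := by
    rw [hT]
    exact div_pos (by positivity) (pow_pos hagap0 2)
  have hζhat0 : 0 < ζhat := by rw [hζhat]; positivity
  set A : ℝ := 144 * (s + 1)^2 * κ^6 / ζ^2 with hA
  have hA0 : 0 < A := by positivity
  have hAz : A * ζhat^2 = 16*(s+1)^2*κ^4 := by
    rw [hA, hζhat]
    field_simp
    ring
  have hTA : T ≤ A * ζhat^2 := by
    rw [hAz, hT, div_le_iff₀ (pow_pos hagap0 2)]
    have hsq2 : (1/(2*(s+1)))^2 ≤ (1-a)^2 := by
      apply pow_le_pow_left₀ (by positivity) hagap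
    have he : (1/(2*(s+1)))^2 = 1/(4*(s+1)^2) := by
      field_simp; ring
    rw [he] at hsq2
    have h4 : 16*(s+1)^2*κ^4 * (1/(4*(s+1)^2)) = 4*κ^4 := by
      field_simp; ring
    calc 4*κ^4 = 16*(s+1)^2*κ^4 * (1/(4*(s+1)^2)) := h4.symm
      _ ≤ 16*(s+1)^2*κ^4 * (1-a)^2 := by
          apply mul_le_mul_of_nonneg_left hsq2 (by positivity)
  have hA1 : 1 ≤ A := by
    rw [hA, le_div_iff₀ (by positivity)]
    have hζsq : ζ^2 ≤ 1 := by nlinarith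
    have hκ6 : (1:ℝ) ≤ κ^6 := by
      calc (1:ℝ) = 1^6 := by norm_num
        _ ≤ κ^6 := pow_le_pow_left₀ (by norm_num) (by linarith) 6
    have hsp : (1:ℝ) ≤ (s+1)^2 := by nlinarith
    nlinarith [mul_le_mul hsp hκ6 (by norm_num) (by positivity : (0:ℝ) ≤ (s+1)^2)]
  set L : ℝ := Real.log A with hL
  have hL0 : 0 ≤ L := Real.log_nonneg hA1
  set B : ℝ := (s + 1/2) * L with hB
  have hB0 : 0 ≤ B := mul_nonneg (by linarith) hL0
  set n : ℕ := (⌈B⌉).toNat with hn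
  have hnZ : (n : ℤ) = ⌈B⌉ := Int.toNat_of_nonneg (Int.ceil_nonneg hB0)
  have hnB : B ≤ (n:ℝ) := by
    have := Int.le_ceil B
    rw [show ((n:ℝ)) = ((n:ℤ):ℝ) by push_cast; ring, hnZ]
    exact this
  -- key membership
  have hP : 1/(s + 1/2) ≤ Real.log (1 + 1/s) := aux_log_one_add_inv s hs0
  have hlogτ : Real.log τ = -Real.log (1 + 1/s) := by
    have : τ = (1 + 1/s)⁻¹ := by
      rw [hτ]; field_simp
    rw [this, Real.log_inv]
  have hloga : Real.log a = Real.log τ / 2 := by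
    rw [ha, Real.log_sqrt hτ0.le]
  have hloga_neg : Real.log a < 0 := Real.log_neg ha0 ha1
  have hlogT : Real.log T ≤ L + 2 * Real.log ζhat := by
    have h := Real.log_le_log hT0 hTA
    rwa [Real.log_mul hA0.ne' (by positivity), Real.log_pow] at h
  have hmem : Real.sqrt T * a ^ n ≤ ζhat := by
    have hlhs : 0 < Real.sqrt T * a ^ n := by positivity
    rw [← Real.exp_log hlhs, ← Real.exp_log hζhat0, Real.exp_le_exp,
        Real.log_mul (by positivity) (by positivity), Real.log_pow,
        Real.log_sqrt hT0.le]
    -- goal : log T / 2 + n * log a ≤ log ζhat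
    have h1 : (n:ℝ) * Real.log a ≤ B * Real.log a :=
      mul_le_mul_of_nonpos_right hnB hloga_neg.le
    have h2 : 1 ≤ (s+1/2) * Real.log (1+1/s) := by
      have hpos : (0:ℝ) < s + 1/2 := by linarith
      calc (1:ℝ) = (s+1/2) * (1/(s+1/2)) := by field_simp
        _ ≤ (s+1/2) * Real.log (1+1/s) := by
            apply mul_le_mul_of_nonneg_left hP hpos.le
    have h3 : L ≤ B * Real.log (1+1/s) := by
      have := le_mul_of_one_le_right hL0 h2
      calc L ≤ L * ((s+1/2) * Real.log (1+1/s)) := this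
        _ = B * Real.log (1+1/s) := by rw [hB]; ring
    have h4 : B * Real.log a = -(B * Real.log (1+1/s)) / 2 := by
      rw [hloga, hlogτ]; ring
    linarith [h1, h3, hlogT, h4.le, h4.ge]
  have hJn : J ≤ n := hJ.2 hmem
  have : (J:ℤ) ≤ (n:ℤ) := by exact_mod_cast hJn
  rw [hnZ] at this
  exact this
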